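/- For all reals α, β > 0, the Beta-Binomial majority-voting error rate over odd ensemble sizes converges to the Beta cumulative probability of the interval below one half: the sequence m ↦ ∑_{s=0}^{m} C(2m+1, s) · B(s+α, 2m+1−s+β) / B(α, β) converges, as m → ∞, to (1/B(α,β)) · ∫_0^{1/2} x^{α−1}·(1−x)^{β−1} dx. -/

import Mathlib

open scoped BigOperators
open Filter

open MeasureTheory Set intervalIntegral

/-- The Beta function `B(a,b) = ∫_0^1 t^(a-1) (1-t)^(b-1) dt`. -/
noncomputable def betaFn (a b : ℝ) : ℝ :=
  ∫ t in (0:ℝ)..1, t ^ (a - 1) * (1 - t) ^ (b - 1)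

noncomputable def binCdf (m : ℕ) (t : ℝ) : ℝ :=
  ∑ s ∈ Finset.range (m + 1), ((2 * m + 1).choose s : ℝ) * t ^ s * (1 - t) ^ (2 * m + 1 - s)


lemma beta_integrand_integrable {a b : ℝ} (ha : 0 < a) (hb : 0 < b) :
    IntervalIntegrable (fun t : ℝ => t ^ (a - 1) * (1 - t) ^ (b - 1)) volume 0 1 := by
  have h1 : IntervalIntegrable (fun t : ℝ => t ^ (a - 1) * (1 - t) ^ (b - 1)) volume 0 (1/2) := by
    apply (intervalIntegrable_rpow' (by linarith)).mul_continuousOn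
    apply ContinuousOn.rpow_const (by fun_prop)
    intro x hx
    rw [uIcc_of_le (by norm_num)] at hx
    left; simp at hx; linarith [hx.2]
  have h2 : IntervalIntegrable (fun t : ℝ => t ^ (a - 1) * (1 - t) ^ (b - 1)) volume (1/2) 1 := by
    have h3 : IntervalIntegrable (fun t : ℝ => (1 - t) ^ (b - 1)) volume (1/2) 1 := by
      have := (intervalIntegrable_rpow' (r := b - 1) (by linarith) (a := 0) (b := 1/2)).comp_sub_left 1
      norm_num at this; simpa using this.symm
    have := h3.mul_continuousOn (g := fun t : ℝ => t ^ (a - 1)) ?_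
    · simpa [mul_comm] using this
    · apply ContinuousOn.rpow_const (by fun_prop)
      intro x hx
      rw [uIcc_of_le (by norm_num)] at hx
      left; simp at hx; linarith [hx.1]
  exact h1.trans h2


lemma full_sum (m : ℕ) (t : ℝ) :
    ∑ s ∈ Finset.range (2 * m + 2), ((2 * m + 1).choose s : ℝ) * t ^ s * (1 - t) ^ (2 * m + 1 - s) = 1 := by
  calc ∑ s ∈ Finset.range (2 * m + 2), ((2 * m + 1).choose s : ℝ) * t ^ s * (1 - t) ^ (2 * m + 1 - s)
      = ∑ s ∈ Finset.range (2 * m + 1 + 1), t ^ s * (1 - t) ^ (2 * m + 1 - s) * ((2 * m + 1).choose s : ℝ) := by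
        exact Finset.sum_congr (by norm_num) (fun s _ => by ring)
    _ = (t + (1 - t)) ^ (2 * m + 1) := (add_pow t (1 - t) (2 * m + 1)).symm
    _ = 1 := by norm_num

lemma choose_sum_le (m : ℕ) :
    ∑ s ∈ Finset.range (2*m+2), ((2 * m + 1).choose s : ℝ) = (2:ℝ) ^ (2*m+1) := by
  rw [show 2*m+2 = 2*m+1+1 by ring]
  exact_mod_cast congrArg (Nat.cast (R := ℝ)) (Nat.sum_range_choose (2*m+1))

lemma two_pow_eq (m : ℕ) : (2:ℝ)^(2*m+1) = 2 * 4^m := by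
  rw [pow_succ, pow_mul]; norm_num; ring

lemma binCdf_nonneg (m : ℕ) {t : ℝ} (h0 : 0 ≤ t) (h1 : t ≤ 1) : 0 ≤ binCdf m t := by
  have h1t : (0:ℝ) ≤ 1 - t := by linarith
  exact Finset.sum_nonneg fun s _ => by positivity

lemma binCdf_le_one (m : ℕ) {t : ℝ} (h0 : 0 ≤ t) (h1 : t ≤ 1) : binCdf m t ≤ 1 := by
  have h1t : (0:ℝ) ≤ 1 - t := by linarith
  rw [← full_sum m t]
  apply Finset.sum_le_sum_of_subset_of_nonneg
  · exact Finset.range_subset_range.2 (by omega)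
  · intro s _ _; positivity

lemma tail_bound_lt (m : ℕ) {t : ℝ} (h0 : 0 < t) (h1 : t < 1/2) :
    1 - binCdf m t ≤ 2 * t * (4 * t * (1 - t)) ^ m := by
  have ht1 : t ≤ 1 - t := by linarith
  have h0' : (0:ℝ) ≤ t := h0.le
  have h1t : (0:ℝ) ≤ 1 - t := by linarith
  have hsplit : binCdf m t
      + ∑ s ∈ Finset.Ico (m+1) (2*m+2), ((2 * m + 1).choose s : ℝ) * t ^ s * (1 - t) ^ (2 * m + 1 - s) = 1 := by
    rw [binCdf, Finset.range_eq_Ico,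
      Finset.sum_Ico_consecutive _ (by omega : 0 ≤ m + 1) (by omega : m + 1 ≤ 2*m+2),
      ← Finset.range_eq_Ico]
    exact full_sum m t
  have htail : ∑ s ∈ Finset.Ico (m+1) (2*m+2), ((2 * m + 1).choose s : ℝ) * t ^ s * (1 - t) ^ (2 * m + 1 - s)
      ≤ 2 * t * (4 * t * (1 - t)) ^ m := by
    calc ∑ s ∈ Finset.Ico (m+1) (2*m+2), ((2 * m + 1).choose s : ℝ) * t ^ s * (1 - t) ^ (2 * m + 1 - s)
        ≤ ∑ s ∈ Finset.Ico (m+1) (2*m+2), ((2 * m + 1).choose s : ℝ) * (t ^ (m+1) * (1 - t) ^ m) := by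
          apply Finset.sum_le_sum
          intro s hs
          simp only [Finset.mem_Ico] at hs
          rw [mul_assoc]
          apply mul_le_mul_of_nonneg_left _ (by positivity)
          have he : t ^ s * (1 - t) ^ (2*m+1-s) = t^(m+1) * (t ^ (s - (m+1)) * (1-t)^(2*m+1-s)) := by
            rw [← mul_assoc, ← pow_add, show m+1+(s-(m+1)) = s by omega]
          rw [he]
          apply mul_le_mul_of_nonneg_left _ (by positivity)
          calc t ^ (s - (m+1)) * (1-t)^(2*m+1-s)
              ≤ (1-t) ^ (s - (m+1)) * (1-t)^(2*m+1-s) := by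
                apply mul_le_mul_of_nonneg_right (pow_le_pow_left₀ h0' ht1 _) (by positivity)
            _ = (1-t) ^ m := by rw [← pow_add]; congr 1; omega
      _ ≤ (2:ℝ) ^ (2*m+1) * (t ^ (m+1) * (1 - t) ^ m) := by
          rw [← Finset.sum_mul]
          apply mul_le_mul_of_nonneg_right _ (by positivity)
          rw [← choose_sum_le m]
          apply Finset.sum_le_sum_of_subset_of_nonneg
          · rw [Finset.range_eq_Ico]; exact Finset.Ico_subset_Ico (by omega) le_rfl
          · intro s _ _; positivity
      _ = 2 * t * (4 * t * (1 - t)) ^ m := by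
          rw [two_pow_eq, mul_pow, mul_pow, pow_succ]; ring
  linarith

lemma head_bound_gt (m : ℕ) {t : ℝ} (h0 : 1/2 < t) (h1 : t < 1) :
    binCdf m t ≤ 2 * (1 - t) * (4 * t * (1 - t)) ^ m := by
  have ht1 : 1 - t ≤ t := by linarith
  have h0' : (0:ℝ) ≤ t := by linarith
  have h1t : (0:ℝ) ≤ 1 - t := by linarith
  calc binCdf m t
      ≤ ∑ s ∈ Finset.range (m+1), ((2 * m + 1).choose s : ℝ) * ((1 - t) ^ (m+1) * t ^ m) := by
        apply Finset.sum_le_sum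
        intro s hs
        simp only [Finset.mem_range] at hs
        rw [mul_assoc]
        apply mul_le_mul_of_nonneg_left _ (by positivity)
        have he : t ^ s * (1 - t) ^ (2*m+1-s) = (1-t)^(m+1) * (t ^ s * (1-t)^(m-s)) := by
          rw [show 2*m+1-s = (m+1) + (m-s) by omega, pow_add]; ring
        rw [he]
        apply mul_le_mul_of_nonneg_left _ (by positivity)
        calc t ^ s * (1-t)^(m-s)
            ≤ t ^ s * t ^ (m-s) := by
              apply mul_le_mul_of_nonneg_left (pow_le_pow_left₀ h1t ht1 _) (by positivity)
          _ = t ^ m := by rw [← pow_add]; congr 1; omega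
    _ ≤ (2:ℝ) ^ (2*m+1) * ((1 - t) ^ (m+1) * t ^ m) := by
        rw [← Finset.sum_mul]
        apply mul_le_mul_of_nonneg_right _ (by positivity)
        rw [← choose_sum_le m]
        apply Finset.sum_le_sum_of_subset_of_nonneg
        · exact Finset.range_subset_range.2 (by omega)
        · intro s _ _; positivity
    _ = 2 * (1 - t) * (4 * t * (1 - t)) ^ m := by
        rw [two_pow_eq, mul_pow, mul_pow, pow_succ]; ring


lemma geo_tendsto {c t : ℝ} (h0 : 0 < t) (h1 : t < 1) (hne : t ≠ 1/2) :
    Tendsto (fun m : ℕ => c * (4 * t * (1 - t)) ^ m) atTop (nhds 0) := by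
  have hr0 : 0 ≤ 4 * t * (1 - t) := by nlinarith
  have hr1 : 4 * t * (1 - t) < 1 := by
    rcases lt_or_gt_of_ne hne with h | h
    · nlinarith [mul_pos (by linarith : (0:ℝ) < 1 - 2*t) (by linarith : (0:ℝ) < 1 - 2*t)]
    · nlinarith [mul_pos (by linarith : (0:ℝ) < 2*t - 1) (by linarith : (0:ℝ) < 2*t - 1)]
  have := (tendsto_pow_atTop_nhds_zero_of_lt_one hr0 hr1).const_mul c
  simpa using this

lemma binCdf_tendsto_one {t : ℝ} (h0 : 0 < t) (h1 : t < 1/2) :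
    Tendsto (fun m => binCdf m t) atTop (nhds 1) := by
  have ht1 : t < 1 := by linarith
  have hlo : Tendsto (fun m : ℕ => 1 - 2 * t * (4 * t * (1 - t)) ^ m) atTop (nhds 1) := by
    have := (geo_tendsto (c := 2*t) h0 ht1 (by linarith)).const_sub 1
    simpa using this
  apply tendsto_of_tendsto_of_tendsto_of_le_of_le hlo tendsto_const_nhds
  · intro m
    show 1 - 2 * t * (4 * t * (1 - t)) ^ m ≤ binCdf m t
    have := tail_bound_lt m h0 h1; linarith
  · intro m; exact binCdf_le_one m h0.le ht1.le

lemma binCdf_tendsto_zero {t : ℝ} (h0 : 1/2 < t) (h1 : t < 1) :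
    Tendsto (fun m => binCdf m t) atTop (nhds 0) := by
  have ht0 : 0 < t := by linarith
  apply tendsto_of_tendsto_of_tendsto_of_le_of_le tendsto_const_nhds
    (geo_tendsto (c := 2*(1-t)) ht0 h1 (by linarith))
  · intro m; exact binCdf_nonneg m ht0.le h1.le
  · intro m; exact head_bound_gt m h0 h1

lemma integrand_eq {α β : ℝ} (m s : ℕ) (hs : s ≤ 2*m+1) {t : ℝ} (h0 : 0 < t) (h1 : t < 1) :
    t ^ s * (1 - t) ^ (2*m+1-s) * (t ^ (α-1) * (1-t)^(β-1))
      = t ^ ((s:ℝ) + α - 1) * (1-t) ^ ((2*m+1:ℝ) - (s:ℝ) + β - 1) := by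
  rw [show (s:ℝ) + α - 1 = (s:ℝ) + (α-1) by ring,
      show (2*(m:ℝ)+1) - (s:ℝ) + β - 1 = ((2*m+1-s : ℕ):ℝ) + (β-1) by
        push_cast [Nat.cast_sub hs]; ring,
      Real.rpow_add h0, Real.rpow_add (by linarith : (0:ℝ) < 1 - t),
      Real.rpow_natCast, Real.rpow_natCast]
  ring

lemma betaFn_eq_Ioo (a b : ℝ) :
    betaFn a b = ∫ t in Ioo (0:ℝ) 1, t ^ (a - 1) * (1 - t) ^ (b - 1) := by
  rw [betaFn, intervalIntegral.integral_of_le (by norm_num : (0:ℝ) ≤ 1)]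
  exact (setIntegral_congr_set Ioo_ae_eq_Ioc).symm

lemma integrableOn_Ioo {a b : ℝ} (ha : 0 < a) (hb : 0 < b) :
    IntegrableOn (fun t : ℝ => t ^ (a - 1) * (1 - t) ^ (b - 1)) (Ioo 0 1) volume :=
  ((beta_integrand_integrable ha hb).1).mono_set Ioo_subset_Ioc_self

lemma sum_beta_eq {α β : ℝ} (hα : 0 < α) (hβ : 0 < β) (m : ℕ) :
    ∑ s ∈ Finset.range (m + 1),
        ((2 * m + 1).choose s : ℝ) * betaFn (s + α) ((2 * m + 1 : ℝ) - s + β)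
      = ∫ t in Ioo (0:ℝ) 1, binCdf m t * (t ^ (α-1) * (1-t)^(β-1)) := by
  have key : ∀ s ∈ Finset.range (m+1),
      ((2 * m + 1).choose s : ℝ) * betaFn (s + α) ((2 * m + 1 : ℝ) - s + β)
        = ∫ t in Ioo (0:ℝ) 1,
            ((2 * m + 1).choose s : ℝ) * t ^ s * (1 - t) ^ (2*m+1-s) * (t ^ (α-1) * (1-t)^(β-1)) := by
    intro s hs
    simp only [Finset.mem_range] at hs
    rw [betaFn_eq_Ioo, ← MeasureTheory.integral_const_mul]
    refine setIntegral_congr_fun measurableSet_Ioo (fun t ht => ?_)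
    rw [mul_assoc (((2 * m + 1).choose s : ℝ)), mul_assoc, integrand_eq m s (by omega) ht.1 ht.2,
        ← mul_assoc]
  rw [Finset.sum_congr rfl key, ← MeasureTheory.integral_finset_sum]
  · refine setIntegral_congr_fun measurableSet_Ioo (fun t ht => ?_)
    rw [binCdf, Finset.sum_mul]
  · intro s hs
    simp only [Finset.mem_range] at hs
    have hsr : (s:ℝ) ≤ 2*(m:ℝ)+1 := by
      have hsn : (s:ℝ) ≤ ((2*m+1:ℕ):ℝ) := Nat.cast_le.2 (by omega)
      push_cast at hsn; linarith
    have hint : IntegrableOn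
        (fun t : ℝ => t ^ ((s:ℝ) + α - 1) * (1-t) ^ ((2*m+1:ℝ) - (s:ℝ) + β - 1)) (Ioo 0 1) volume := by
      have := integrableOn_Ioo (a := (s:ℝ) + α) (b := (2*(m:ℝ)+1) - s + β)
        (by positivity) (by linarith)
      simpa using this
    refine IntegrableOn.congr_fun (hint.const_mul (((2 * m + 1).choose s : ℝ)))
      (fun t ht => ?_) measurableSet_Ioo
    rw [mul_assoc (((2 * m + 1).choose s : ℝ)), mul_assoc,
        integrand_eq m s (by omega) ht.1 ht.2, ← mul_assoc]


theorem betaBinomial_majority_error_tendsto (α β : ℝ) (hα : 0 < α) (hβ : 0 < β) :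
    Tendsto
      (fun m : ℕ => ∑ s ∈ Finset.range (m + 1),
        ((2 * m + 1).choose s : ℝ)
          * betaFn (s + α) ((2 * m + 1 : ℝ) - s + β) / betaFn α β)
      atTop
      (nhds ((1 / betaFn α β) * ∫ x in (0:ℝ)..(1/2), x ^ (α - 1) * (1 - x) ^ (β - 1))) := by
  set g : ℝ → ℝ := fun t => t ^ (α - 1) * (1 - t) ^ (β - 1) with hg
  set f : ℝ → ℝ := indicator (Ioo (0:ℝ) (1/2)) g with hf
  -- main convergence of the numerators
  have hmain : Tendsto (fun m : ℕ => ∫ t in Ioo (0:ℝ) 1, binCdf m t * g t) atTop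
      (nhds (∫ t in Ioo (0:ℝ) 1, f t)) := by
    apply tendsto_integral_of_dominated_convergence g
    · intro m
      apply ContinuousOn.aestronglyMeasurable _ measurableSet_Ioo
      apply ContinuousOn.mul
      · apply Continuous.continuousOn
        unfold binCdf
        fun_prop
      · apply ContinuousOn.mul
        · exact ContinuousOn.rpow_const continuousOn_id
            (fun x hx => Or.inl (ne_of_gt hx.1))
        · exact ContinuousOn.rpow_const (continuousOn_const.sub continuousOn_id)
            (fun x hx => Or.inl (sub_ne_zero.2 (ne_of_gt hx.2)))
    · exact integrableOn_Ioo hα hβ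
    · intro m
      filter_upwards [ae_restrict_mem measurableSet_Ioo] with t ht
      have h0 : (0:ℝ) ≤ t := ht.1.le
      have h1 : t ≤ 1 := ht.2.le
      have hgpos : 0 ≤ g t := by
        have : (0:ℝ) < 1 - t := by linarith [ht.2]
        have := ht.1
        positivity
      rw [Real.norm_eq_abs, abs_mul, abs_of_nonneg (binCdf_nonneg m h0 h1),
        abs_of_nonneg hgpos]
      nlinarith [binCdf_le_one m h0 h1]
    · have hne : ∀ᵐ t : ℝ ∂(volume.restrict (Ioo (0:ℝ) 1)), t ≠ 1/2 := by
        refine ae_restrict_of_ae ?_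
        have hset : {a : ℝ | ¬ a ≠ 1/2} = {(1/2 : ℝ)} := by ext x; simp
        rw [ae_iff, hset]
        exact measure_singleton _
      filter_upwards [ae_restrict_mem measurableSet_Ioo, hne] with t ht htne
      rcases lt_or_gt_of_ne htne with h | h
      · have : f t = g t := indicator_of_mem (Set.mem_Ioo.2 ⟨ht.1, h⟩) g
        rw [this]
        have := (binCdf_tendsto_one ht.1 h).mul_const (g t)
        simpa using this
      · have : f t = 0 := indicator_of_notMem (fun hx => absurd hx.2 (not_lt.2 h.le)) g
        rw [this]
        have := (binCdf_tendsto_zero h ht.2).mul_const (g t)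
        simpa using this
  -- identify the limit
  have hlim : (∫ t in Ioo (0:ℝ) 1, f t) = ∫ x in (0:ℝ)..(1/2), g x := by
    rw [hf, MeasureTheory.integral_indicator measurableSet_Ioo,
      Measure.restrict_restrict measurableSet_Ioo,
      inter_eq_self_of_subset_left (Ioo_subset_Ioo le_rfl (by norm_num)),
      intervalIntegral.integral_of_le (by norm_num : (0:ℝ) ≤ 1/2)]
    exact setIntegral_congr_set Ioo_ae_eq_Ioc
  rw [← hlim]
  have := hmain.div_const (betaFn α β)
  have heq : (fun m : ℕ => (∫ t in Ioo (0:ℝ) 1, binCdf m t * g t) / betaFn α β)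
      = fun m : ℕ => ∑ s ∈ Finset.range (m + 1),
          ((2 * m + 1).choose s : ℝ) * betaFn (s + α) ((2 * m + 1 : ℝ) - s + β) / betaFn α β := by
    funext m
    rw [← sum_beta_eq hα hβ m, Finset.sum_div]
  rw [heq] at this
  convert this using 2
  ring
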